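/- Fix real numbers 0 ≤ λ1 < λ2 < 1. For all Φ1, Φ2 ∈ ℝ and every positive integer t, sup over θ ∈ ℝ and β0, β1 ∈ 𝔻 of ‖E_{Φ1,θ,β0,β1}^t δ_0 − E_{Φ2,θ,β0,β1}^t δ_0‖ is at most 2π·λ2·|Φ1 − Φ2|·t². -/

import Mathlib

open scoped ENNReal ComplexConjugate Classical
open Filter MeasureTheory

noncomputable section

abbrev l2Z : Type := lp (fun _ : ℤ => ℂ) 2

/-- The standard basis vector `δ_n` of `ℓ²(ℤ)`. -/
def deltaVec (n : ℤ) : l2Z := lp.single 2 n 1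

/-- Membership in the domain of the position operator `X`. -/
def InDomX (ψ : l2Z) : Prop := Memℓp (fun n : ℤ => (n : ℂ) * ψ n) 2

/-- The position operator `X`, defined (with junk value `0` off its domain). -/
def posX (ψ : l2Z) : l2Z :=
  if h : InDomX ψ then (⟨fun n : ℤ => (n : ℂ) * ψ n, h⟩ : l2Z) else 0

/-- `‖X ψ‖²`, computed as an extended real (possibly `+∞`). -/
def XnormSq (ψ : l2Z) : ℝ≥0∞ := ∑' n : ℤ, ENNReal.ofReal ((n : ℝ) ^ 2 * ‖ψ n‖ ^ 2)

/-- `ρ_n = √(1 - |α_n|²)`. -/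
def cmvRho (α : ℤ → ℂ) (n : ℤ) : ℝ := Real.sqrt (1 - ‖α n‖ ^ 2)

/-- The pointwise action of `M = ⊕ₙ Θ(α_{2n+1})` (blocks acting on the pairs
`{2n+1, 2n+2}`): a block `Θ(α_j)` acts on `span{δ_j, δ_{j+1}}` by the matrix
`[[conj α_j, ρ_j], [ρ_j, -α_j]]`. -/
def cmvMApply (α : ℤ → ℂ) (ψ : ℤ → ℂ) : ℤ → ℂ := fun n =>
  if Odd n then conj (α n) * ψ n + (cmvRho α n : ℂ) * ψ (n + 1)
  else (cmvRho α (n - 1) : ℂ) * ψ (n - 1) - α (n - 1) * ψ n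

/-- The pointwise action of `L = ⊕ₙ Θ(α_{2n})` (blocks acting on the pairs `{2n, 2n+1}`). -/
def cmvLApply (α : ℤ → ℂ) (ψ : ℤ → ℂ) : ℤ → ℂ := fun n =>
  if Even n then conj (α n) * ψ n + (cmvRho α n : ℂ) * ψ (n + 1)
  else (cmvRho α (n - 1) : ℂ) * ψ (n - 1) - α (n - 1) * ψ n

/-- `E` is the extended CMV matrix with Verblunsky coefficients `α`: a unitary operator on
`ℓ²(ℤ)` acting pointwise as `E = L M`. -/
def IsECMV (α : ℤ → ℂ) (E : l2Z →L[ℂ] l2Z) : Prop :=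
  E ∈ unitary (l2Z →L[ℂ] l2Z) ∧
    ∀ ψ : l2Z, ∀ n : ℤ, (E ψ) n = cmvLApply α (cmvMApply α (fun m => ψ m)) n

/-- The Verblunsky coefficients of the (locally perturbed) unitary almost-Mathieu operator:
`α₀ = β₀`, `α₁ = β₁`, `α_{2n-1} = λ₂ sin(2π(nΦ+θ))` for `n ≠ 1`, and `α_{2n} = √(1-λ₁²)`
for `n ≠ 0`. -/
def uamoAlpha (lam1 lam2 Phi theta : ℝ) (beta0 beta1 : ℂ) : ℤ → ℂ := fun n =>
  if n = 0 then beta0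
  else if n = 1 then beta1
  else if Odd n then
    ((lam2 * Real.sin (2 * Real.pi * ((((n + 1) / 2 : ℤ) : ℝ) * Phi + theta)) : ℝ) : ℂ)
  else ((Real.sqrt (1 - lam1 ^ 2) : ℝ) : ℂ)

/-! ### Auxiliary lemmas -/

lemma aux_norm_add_I_mul_sq (a b : ℝ) : ‖(a:ℂ) + Complex.I * (b:ℂ)‖^2 = a^2 + b^2 := by
  rw [Complex.sq_norm, Complex.normSq_apply]
  simp
  ring

lemma aux_sin_sq_pos (lam : ℝ) (h1 : lam^2 < 1) (v : ℝ) : 0 < 1 - lam^2 * Real.sin v ^ 2 := by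
  nlinarith [Real.sin_sq_le_one v, sq_nonneg (Real.sin v), sq_nonneg lam]

lemma aux_curve_hasDeriv (lam : ℝ) (h1 : lam^2 < 1) (u : ℝ) :
    HasDerivAt (fun v : ℝ => ((lam * Real.sin v : ℝ) : ℂ)
        + Complex.I * ((Real.sqrt (1 - lam^2 * Real.sin v ^2) : ℝ) : ℂ))
      (((lam * Real.cos u : ℝ) : ℂ) + Complex.I *
        ((-(lam^2 * Real.sin u * Real.cos u) / Real.sqrt (1 - lam^2 * Real.sin u^2) : ℝ) : ℂ)) u := by
  have hs : HasDerivAt (fun v : ℝ => 1 - lam^2 * Real.sin v ^ 2)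
      (-(lam^2 * (2 * Real.sin u * Real.cos u))) u := by
    have := (((Real.hasDerivAt_sin u).pow 2).const_mul (lam^2)).const_sub 1
    exact this.congr_deriv (by ring)
  have hsqrt : HasDerivAt (fun v : ℝ => Real.sqrt (1 - lam^2 * Real.sin v ^ 2))
      (-(lam^2 * Real.sin u * Real.cos u) / Real.sqrt (1 - lam^2 * Real.sin u^2)) u := by
    have h := (Real.hasDerivAt_sqrt (aux_sin_sq_pos lam h1 u).ne').comp u hs
    exact h.congr_deriv (by
      have hne := (Real.sqrt_pos.2 (aux_sin_sq_pos lam h1 u)).ne'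
      field_simp)
  have h2 : HasDerivAt (fun v : ℝ => lam * Real.sin v) (lam * Real.cos u) u :=
    (Real.hasDerivAt_sin u).const_mul lam
  exact h2.ofReal_comp.add (hsqrt.ofReal_comp.const_mul Complex.I)

lemma aux_curve_deriv_norm_le (lam : ℝ) (h0 : 0 ≤ lam) (h1 : lam^2 < 1) (u : ℝ) :
    ‖((lam * Real.cos u : ℝ) : ℂ) + Complex.I *
      ((-(lam^2 * Real.sin u * Real.cos u) / Real.sqrt (1 - lam^2 * Real.sin u^2) : ℝ) : ℂ)‖ ≤ lam := by
  set s := Real.sin u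
  set c := Real.cos u
  set r := Real.sqrt (1 - lam^2 * s^2) with hr
  have hrpos : 0 < r := Real.sqrt_pos.2 (aux_sin_sq_pos lam h1 u)
  have hr2 : r^2 = 1 - lam^2*s^2 := Real.sq_sqrt (aux_sin_sq_pos lam h1 u).le
  have hnorm : ‖((lam * c : ℝ) : ℂ) + Complex.I * ((-(lam^2 * s * c) / r : ℝ) : ℂ)‖^2
      = (lam*c)^2 + (-(lam^2*s*c)/r)^2 := aux_norm_add_I_mul_sq _ _
  have hb : (lam*c)^2 + (lam^2*s*c/r)^2 ≤ lam^2 := by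
    have hcs : c^2 ≤ r^2 := by
      rw [hr2]
      have : s^2 + c^2 = 1 := Real.sin_sq_add_cos_sq u
      nlinarith [sq_nonneg s, sq_nonneg lam]
    have key : (lam*c)^2 + (lam^2*s*c/r)^2 = lam^2 * (c^2/r^2) := by
      field_simp
      nlinarith [hr2]
    rw [key]
    have : c^2/r^2 ≤ 1 := by
      rw [div_le_one (by positivity)]; exact hcs
    nlinarith [sq_nonneg lam]
  have hn0 : 0 ≤ ‖((lam * c : ℝ) : ℂ) + Complex.I * ((-(lam^2 * s * c) / r : ℝ) : ℂ)‖ := norm_nonneg _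
  have : (-(lam^2*s*c)/r)^2 = (lam^2*s*c/r)^2 := by ring
  nlinarith [hnorm, hb, this]

lemma aux_curve_chord_le (lam : ℝ) (h0 : 0 ≤ lam) (h1 : lam^2 < 1) {x y : ℝ} (hxy : y ≤ x) :
    (lam * (Real.sin x - Real.sin y))^2
      + (Real.sqrt (1 - lam^2 * Real.sin x ^2) - Real.sqrt (1 - lam^2 * Real.sin y ^2))^2
      ≤ lam^2 * (x - y)^2 := by
  set f : ℝ → ℂ := fun v => ((lam * Real.sin v : ℝ) : ℂ)
      + Complex.I * ((Real.sqrt (1 - lam^2 * Real.sin v ^2) : ℝ) : ℂ) with hf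
  have key : ‖f x - f y‖ ≤ lam * (x - y) := by
    exact norm_image_sub_le_of_norm_deriv_le_segment'
      (f := f)
      (f' := fun u => ((lam * Real.cos u : ℝ) : ℂ) + Complex.I *
        ((-(lam^2 * Real.sin u * Real.cos u) / Real.sqrt (1 - lam^2 * Real.sin u^2) : ℝ) : ℂ))
      (a := y) (b := x)
      (fun u _ => (aux_curve_hasDeriv lam h1 u).hasDerivWithinAt)
      (fun u _ => aux_curve_deriv_norm_le lam h0 h1 u) x (Set.right_mem_Icc.2 hxy)
  have heq : f x - f y = ((lam * Real.sin x - lam * Real.sin y : ℝ) : ℂ)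
      + Complex.I * ((Real.sqrt (1 - lam^2 * Real.sin x ^2)
        - Real.sqrt (1 - lam^2 * Real.sin y ^2) : ℝ) : ℂ) := by
    simp only [hf]
    push_cast
    ring
  have h2 : ‖f x - f y‖^2 = (lam * (Real.sin x - Real.sin y))^2
      + (Real.sqrt (1 - lam^2 * Real.sin x ^2) - Real.sqrt (1 - lam^2 * Real.sin y ^2))^2 := by
    rw [heq, aux_norm_add_I_mul_sq]
    ring
  nlinarith [norm_nonneg (f x - f y), mul_nonneg h0 (sub_nonneg.2 hxy)]

lemma aux_curve_chord (lam : ℝ) (h0 : 0 ≤ lam) (h1 : lam^2 < 1) (x y : ℝ) :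
    (lam * (Real.sin x - Real.sin y))^2
      + (Real.sqrt (1 - lam^2 * Real.sin x ^2) - Real.sqrt (1 - lam^2 * Real.sin y ^2))^2
      ≤ lam^2 * (x - y)^2 := by
  rcases le_total y x with h | h
  · exact aux_curve_chord_le lam h0 h1 h
  · have := aux_curve_chord_le lam h0 h1 h
    nlinarith [this]

def pairEquiv (c : ℤ) : ℤ × Bool ≃ ℤ where
  toFun p := 2 * p.1 + c + (if p.2 then 1 else 0)
  invFun n := ((n - c) / 2, decide ((n - c) % 2 = 1))
  left_inv p := by
    rcases p with ⟨m, b⟩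
    cases b <;> simp <;> omega
  right_inv n := by
    simp only
    split_ifs with h <;> simp_all <;> omega

lemma aux_tsum_pair (c : ℤ) (f : ℤ → ℝ≥0∞) :
    ∑' n : ℤ, f n = ∑' m : ℤ, (f (2 * m + c) + f (2 * m + c + 1)) := by
  rw [← (pairEquiv c).tsum_eq f, ENNReal.tsum_prod']
  congr 1
  funext m
  rw [tsum_bool]
  simp [pairEquiv]

lemma aux_block_norm_sq (a : ℂ) (r : ℝ) (x y : ℂ) :
    ‖conj a * x + (r:ℂ) * y‖^2 + ‖(r:ℂ) * x - a * y‖^2 = (‖a‖^2 + r^2) * (‖x‖^2 + ‖y‖^2) := by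
  simp only [Complex.sq_norm, Complex.normSq_apply]
  simp
  ring
/-! ### Properties of `uamoAlpha` -/

lemma uamoAlpha_even (lam1 lam2 Phi1 Phi2 theta : ℝ) (beta0 beta1 : ℂ) {n : ℤ} (hn : Even n) :
    uamoAlpha lam1 lam2 Phi1 theta beta0 beta1 n = uamoAlpha lam1 lam2 Phi2 theta beta0 beta1 n := by
  have h1 : n ≠ 1 := by rintro rfl; exact (by decide : ¬ Even (1:ℤ)) hn
  have h2 : ¬ Odd n := Int.not_odd_iff_even.mpr hn
  by_cases h0 : n = 0 <;> simp [uamoAlpha, h0, h1, h2]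

lemma uamoAlpha_norm_le (lam1 lam2 Phi theta : ℝ) (beta0 beta1 : ℂ)
    (h1 : 0 ≤ lam1) (h1' : lam1 < 1) (h2 : 0 ≤ lam2) (h2' : lam2 < 1)
    (hb0 : ‖beta0‖ < 1) (hb1 : ‖beta1‖ < 1) (n : ℤ) :
    ‖uamoAlpha lam1 lam2 Phi theta beta0 beta1 n‖ ≤ 1 := by
  unfold uamoAlpha
  split_ifs with hn0 hn1 hodd
  · exact hb0.le
  · exact hb1.le
  · rw [Complex.norm_real, Real.norm_eq_abs]
    have := Real.neg_one_le_sin (2 * Real.pi * ((((n + 1) / 2 : ℤ) : ℝ) * Phi + theta))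
    have := Real.sin_le_one (2 * Real.pi * ((((n + 1) / 2 : ℤ) : ℝ) * Phi + theta))
    rw [abs_le]
    constructor <;> nlinarith
  · rw [Complex.norm_real, Real.norm_eq_abs, abs_of_nonneg (Real.sqrt_nonneg _)]
    calc Real.sqrt (1 - lam1^2) ≤ Real.sqrt 1 := Real.sqrt_le_sqrt (by nlinarith)
      _ = 1 := Real.sqrt_one

lemma uamoAlpha_odd (lam1 lam2 Phi theta : ℝ) (beta0 beta1 : ℂ) {n : ℤ}
    (h0 : n ≠ 0) (h1 : n ≠ 1) (hodd : Odd n) :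
    uamoAlpha lam1 lam2 Phi theta beta0 beta1 n =
      ((lam2 * Real.sin (2 * Real.pi * ((((n + 1) / 2 : ℤ) : ℝ) * Phi + theta)) : ℝ) : ℂ) := by
  simp [uamoAlpha, h0, h1, hodd]

/-! ### Support propagation -/

def SuppIn (N : ℤ) (f : ℤ → ℂ) : Prop := ∀ n : ℤ, (n < -N ∨ N < n) → f n = 0

lemma SuppIn.mono {N N' : ℤ} (h : N ≤ N') {f : ℤ → ℂ} (hf : SuppIn N f) : SuppIn N' f :=
  fun n hn => hf n (by omega)

lemma SuppIn.cmvM {N : ℤ} {f : ℤ → ℂ} (α : ℤ → ℂ) (hf : SuppIn N f) :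
    SuppIn (N + 1) (cmvMApply α f) := by
  intro n hn
  have e1 : f n = 0 := hf n (by omega)
  have e2 : f (n + 1) = 0 := hf (n + 1) (by omega)
  have e3 : f (n - 1) = 0 := hf (n - 1) (by omega)
  unfold cmvMApply
  split_ifs <;> simp [e1, e2, e3]

lemma SuppIn.cmvL {N : ℤ} {f : ℤ → ℂ} (α : ℤ → ℂ) (hf : SuppIn N f) :
    SuppIn (N + 1) (cmvLApply α f) := by
  intro n hn
  have e1 : f n = 0 := hf n (by omega)
  have e2 : f (n + 1) = 0 := hf (n + 1) (by omega)
  have e3 : f (n - 1) = 0 := hf (n - 1) (by omega)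
  unfold cmvLApply
  split_ifs <;> simp [e1, e2, e3]

lemma SuppIn.ecmv {α : ℤ → ℂ} {E : l2Z →L[ℂ] l2Z} (hE : IsECMV α E) {N : ℤ} {ψ : l2Z}
    (hψ : SuppIn N (fun m => ψ m)) : SuppIn (N + 2) (fun m => (E ψ) m) := by
  have : SuppIn (N + 1 + 1) (cmvLApply α (cmvMApply α (fun m => ψ m))) :=
    (hψ.cmvM α).cmvL α
  intro n hn
  show (E ψ) n = 0
  rw [hE.2 ψ n]
  exact this n (by omega)

lemma SuppIn.pow_deltaVec {α : ℤ → ℂ} {E : l2Z →L[ℂ] l2Z} (hE : IsECMV α E) (k : ℕ) :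
    SuppIn (2 * k) (fun m => ((E ^ k) (deltaVec 0)) m) := by
  induction k with
  | zero =>
      intro n hn
      simp only [pow_zero, ContinuousLinearMap.one_apply, deltaVec]
      rw [lp.single_apply]
      have : n ≠ 0 := by omega
      simp [this]
  | succ k ih =>
      have h2 : (E ^ (k+1)) (deltaVec 0) = E ((E ^ k) (deltaVec 0)) := by
        rw [pow_succ' E k]
        rfl
      rw [h2]
      have := SuppIn.ecmv hE ih
      intro n hn
      exact this n (by omega)
/-! ### Pointwise algebra of `cmvLApply` -/

lemma cmvLApply_congr {α1 α2 : ℤ → ℂ} (h : ∀ n : ℤ, Even n → α1 n = α2 n) (f : ℤ → ℂ) (n : ℤ) :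
    cmvLApply α1 f n = cmvLApply α2 f n := by
  unfold cmvLApply cmvRho
  by_cases hn : Even n
  · rw [if_pos hn, if_pos hn, h n hn]
  · have he : Even (n - 1) := by
      rw [Int.even_sub_one]
      exact fun h' => hn (by simpa using h')
    rw [if_neg hn, if_neg hn, h (n-1) he]

lemma cmvLApply_sub (α : ℤ → ℂ) (f g : ℤ → ℂ) (n : ℤ) :
    cmvLApply α f n - cmvLApply α g n = cmvLApply α (fun j => f j - g j) n := by
  unfold cmvLApply
  split_ifs <;> ring

lemma lp_ofReal_norm_sq (w : l2Z) :
    ENNReal.ofReal (‖w‖^2) = ∑' n : ℤ, ENNReal.ofReal (‖w n‖^2) := by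
  have hp2 : (2:ℝ≥0∞).toReal = 2 := by norm_num
  have hsum := lp.hasSum_norm (p := 2) (E := fun _ : ℤ => ℂ) (by rw [hp2]; norm_num) w
  rw [hp2] at hsum
  have hrp : ∀ x : ℝ, x ^ (2:ℝ) = x ^ (2:ℕ) := fun x => by
    rw [← Real.rpow_natCast x 2]; norm_num
  have hsum2 : HasSum (fun i : ℤ => ‖w i‖ ^ (2:ℕ)) (‖w‖ ^ (2:ℕ)) := by
    simpa [hrp] using hsum
  rw [← hsum2.tsum_eq]
  exact ENNReal.ofReal_tsum_of_nonneg (fun n => by positivity) hsum2.summable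

/-! ### Block estimates -/

lemma aux_Lblock (α : ℤ → ℂ) (hle : ∀ n, ‖α n‖ ≤ 1) (f : ℤ → ℂ) (m : ℤ) :
    ‖cmvLApply α f (2*m)‖^2 + ‖cmvLApply α f (2*m+1)‖^2 = ‖f (2*m)‖^2 + ‖f (2*m+1)‖^2 := by
  have heven : Even (2*m) := even_two_mul m
  have hodd : ¬ Even (2*m+1) := by rw [Int.even_iff]; omega
  have e1 : cmvLApply α f (2*m) =
      conj (α (2*m)) * f (2*m) + ((cmvRho α (2*m) : ℝ) : ℂ) * f (2*m+1) := by
    unfold cmvLApply; rw [if_pos heven]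
  have e2 : cmvLApply α f (2*m+1) =
      ((cmvRho α (2*m) : ℝ) : ℂ) * f (2*m) - α (2*m) * f (2*m+1) := by
    unfold cmvLApply
    rw [if_neg hodd]
    norm_num
  rw [e1, e2, aux_block_norm_sq]
  have hrho : (cmvRho α (2*m))^2 = 1 - ‖α (2*m)‖^2 := by
    unfold cmvRho
    rw [Real.sq_sqrt]
    nlinarith [hle (2*m), norm_nonneg (α (2*m))]
  rw [hrho]
  ring

lemma aux_Mdiff_pair (α1 α2 : ℤ → ℂ) (f : ℤ → ℂ) (m : ℤ) :
    (cmvMApply α1 f (2*m+1) - cmvMApply α2 f (2*m+1)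
      = conj (α1 (2*m+1) - α2 (2*m+1)) * f (2*m+1)
        + (((cmvRho α1 (2*m+1) - cmvRho α2 (2*m+1) : ℝ)) : ℂ) * f (2*m+1+1))
    ∧ (cmvMApply α1 f (2*m+1+1) - cmvMApply α2 f (2*m+1+1)
      = (((cmvRho α1 (2*m+1) - cmvRho α2 (2*m+1) : ℝ)) : ℂ) * f (2*m+1)
        - (α1 (2*m+1) - α2 (2*m+1)) * f (2*m+1+1)) := by
  have hodd : Odd (2*m+1) := by rw [Int.odd_iff]; omega
  have hnotodd : ¬ Odd (2*m+1+1) := by rw [Int.odd_iff]; omega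
  have hidx : (2*m+1+1-1 : ℤ) = 2*m+1 := by ring
  constructor
  · unfold cmvMApply
    rw [if_pos hodd, if_pos hodd, map_sub]
    push_cast
    ring
  · unfold cmvMApply
    rw [if_neg hnotodd, if_neg hnotodd, hidx]
    push_cast
    ring

lemma aux_Mblock
    (lam1 lam2 : ℝ) (h1 : 0 ≤ lam1) (h12 : lam1 < lam2) (h2 : lam2 < 1)
    (Phi1 Phi2 theta : ℝ) (beta0 beta1 : ℂ)
    (t : ℕ) (ht : 0 < t)
    (ψc : ℤ → ℂ) (hsupp : SuppIn (2*(t:ℤ) - 2) ψc) (m : ℤ) :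
    ‖cmvMApply (uamoAlpha lam1 lam2 Phi1 theta beta0 beta1) ψc (2*m+1)
      - cmvMApply (uamoAlpha lam1 lam2 Phi2 theta beta0 beta1) ψc (2*m+1)‖^2
    + ‖cmvMApply (uamoAlpha lam1 lam2 Phi1 theta beta0 beta1) ψc (2*m+1+1)
      - cmvMApply (uamoAlpha lam1 lam2 Phi2 theta beta0 beta1) ψc (2*m+1+1)‖^2
    ≤ (2 * Real.pi * lam2 * |Phi1 - Phi2| * (t:ℝ))^2 * (‖ψc (2*m+1)‖^2 + ‖ψc (2*m+1+1)‖^2) := by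
  have hlam2 : 0 ≤ lam2 := le_trans h1 h12.le
  set α1 := uamoAlpha lam1 lam2 Phi1 theta beta0 beta1 with hα1
  set α2 := uamoAlpha lam1 lam2 Phi2 theta beta0 beta1 with hα2
  set C : ℝ := 2 * Real.pi * lam2 * |Phi1 - Phi2| * (t:ℝ) with hCdef
  obtain ⟨e1, e2⟩ := aux_Mdiff_pair α1 α2 ψc m
  set a : ℂ := α1 (2*m+1) - α2 (2*m+1) with ha
  set r : ℝ := cmvRho α1 (2*m+1) - cmvRho α2 (2*m+1) with hr
  rw [e1, e2, aux_block_norm_sq]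
  by_cases hm0 : m = 0
  · -- block with β₁ : no difference
    subst hm0
    have h11 : α1 (2*0+1) = α2 (2*0+1) := by
      rw [hα1, hα2]; norm_num [uamoAlpha]
    have ha0 : a = 0 := by rw [ha, h11, sub_self]
    have hr0 : r = 0 := by rw [hr]; unfold cmvRho; rw [h11, sub_self]
    rw [ha0, hr0]
    simp only [norm_zero]
    have : ((0:ℝ)^2 + (0:ℝ)^2) = 0 := by norm_num
    rw [this, zero_mul]
    positivity
  · by_cases hout : ((t:ℤ) - 1 ≤ m ∨ m ≤ -(t:ℤ) - 1)
    · -- outside the support of ψ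
      have hz1 : ψc (2*m+1) = 0 := hsupp (2*m+1) (by omega)
      have hz2 : ψc (2*m+1+1) = 0 := hsupp (2*m+1+1) (by omega)
      rw [hz1, hz2]
      simp
    · -- the analytic estimate
      push_neg at hout
      obtain ⟨hmu, hml⟩ := hout
      have hodd : Odd (2*m+1 : ℤ) := by rw [Int.odd_iff]; omega
      have hn0 : (2*m+1 : ℤ) ≠ 0 := by omega
      have hn1 : (2*m+1 : ℤ) ≠ 1 := by omega
      have hk : ((2*m+1+1)/2 : ℤ) = m + 1 := by omega
      set x : ℝ := 2 * Real.pi * (((m+1 : ℤ) : ℝ) * Phi1 + theta) with hx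
      set y : ℝ := 2 * Real.pi * (((m+1 : ℤ) : ℝ) * Phi2 + theta) with hy
      have hv1 : α1 (2*m+1) = ((lam2 * Real.sin x : ℝ) : ℂ) := by
        rw [hα1, uamoAlpha_odd lam1 lam2 Phi1 theta beta0 beta1 hn0 hn1 hodd, hk]
      have hv2 : α2 (2*m+1) = ((lam2 * Real.sin y : ℝ) : ℂ) := by
        rw [hα2, uamoAlpha_odd lam1 lam2 Phi2 theta beta0 beta1 hn0 hn1 hodd, hk]
      have hna : ‖a‖^2 = (lam2 * (Real.sin x - Real.sin y))^2 := by
        rw [ha, hv1, hv2]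
        rw [show ((lam2 * Real.sin x : ℝ) : ℂ) - ((lam2 * Real.sin y : ℝ) : ℂ)
          = ((lam2 * (Real.sin x - Real.sin y) : ℝ) : ℂ) by push_cast; ring]
        rw [Complex.norm_real, Real.norm_eq_abs, sq_abs]
      have hrr : r = Real.sqrt (1 - lam2^2 * Real.sin x ^ 2)
          - Real.sqrt (1 - lam2^2 * Real.sin y ^ 2) := by
        rw [hr]
        unfold cmvRho
        rw [hv1, hv2, Complex.norm_real, Complex.norm_real, Real.norm_eq_abs,
          Real.norm_eq_abs, sq_abs, sq_abs]
        ring_nf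
      have hchord := aux_curve_chord lam2 hlam2 (by nlinarith) x y
      have hxy : x - y = 2 * Real.pi * ((m:ℝ)+1) * (Phi1 - Phi2) := by
        rw [hx, hy]; push_cast; ring
      have hm2 : ((m:ℝ)+1)^2 ≤ (t:ℝ)^2 := by
        have h1' : (m:ℝ) ≤ (t:ℝ) - 2 := by exact_mod_cast (by omega : (m:ℤ) ≤ (t:ℤ) - 2)
        have h2' : -(t:ℝ) ≤ (m:ℝ) := by exact_mod_cast (by omega : -(t:ℤ) ≤ (m:ℤ))
        nlinarith [mul_nonneg (by linarith : (0:ℝ) ≤ (t:ℝ) - ((m:ℝ)+1))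
          (by linarith : (0:ℝ) ≤ (t:ℝ) + ((m:ℝ)+1))]
      have hfin : ‖a‖^2 + r^2 ≤ C^2 := by
        rw [hna, hrr]
        have hCsq : C^2 = (2*Real.pi*lam2)^2 * (Phi1-Phi2)^2 * (t:ℝ)^2 := by
          rw [hCdef]
          rw [show (2 * Real.pi * lam2 * |Phi1 - Phi2| * (t:ℝ))^2
            = (2*Real.pi*lam2)^2 * |Phi1-Phi2|^2 * (t:ℝ)^2 by ring, sq_abs]
        rw [hCsq]
        have hstep : lam2^2 * (x - y)^2 = (2*Real.pi*lam2)^2 * (Phi1-Phi2)^2 * ((m:ℝ)+1)^2 := by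
          rw [hxy]; ring
        have hmono : (2*Real.pi*lam2)^2 * (Phi1-Phi2)^2 * ((m:ℝ)+1)^2
            ≤ (2*Real.pi*lam2)^2 * (Phi1-Phi2)^2 * (t:ℝ)^2 := by
          have hnn := mul_nonneg (sq_nonneg (2*Real.pi*lam2)) (sq_nonneg (Phi1-Phi2))
          exact mul_le_mul_of_nonneg_left hm2 hnn
        calc (lam2 * (Real.sin x - Real.sin y))^2
            + (Real.sqrt (1 - lam2^2 * Real.sin x ^2) - Real.sqrt (1 - lam2^2 * Real.sin y ^2))^2
            ≤ lam2^2 * (x - y)^2 := hchord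
          _ = (2*Real.pi*lam2)^2 * (Phi1-Phi2)^2 * ((m:ℝ)+1)^2 := hstep
          _ ≤ (2*Real.pi*lam2)^2 * (Phi1-Phi2)^2 * (t:ℝ)^2 := hmono
      have hS : 0 ≤ ‖ψc (2*m+1)‖^2 + ‖ψc (2*m+1+1)‖^2 := by positivity
      exact mul_le_mul_of_nonneg_right hfin hS

/-! ### The core one-step estimate -/

lemma core_step
    (lam1 lam2 : ℝ) (h1 : 0 ≤ lam1) (h12 : lam1 < lam2) (h2 : lam2 < 1)
    (Phi1 Phi2 theta : ℝ) (beta0 beta1 : ℂ) (hb0 : ‖beta0‖ < 1) (hb1 : ‖beta1‖ < 1)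
    (t : ℕ) (ht : 0 < t)
    (E1 E2 : l2Z →L[ℂ] l2Z)
    (hE1 : IsECMV (uamoAlpha lam1 lam2 Phi1 theta beta0 beta1) E1)
    (hE2 : IsECMV (uamoAlpha lam1 lam2 Phi2 theta beta0 beta1) E2)
    (ψ : l2Z) (hsupp : SuppIn (2*(t:ℤ) - 2) (fun m => ψ m)) (hψ : ‖ψ‖ ≤ 1) :
    ‖E1 ψ - E2 ψ‖ ≤ 2 * Real.pi * lam2 * |Phi1 - Phi2| * (t:ℝ) := by
  have hlam2 : 0 ≤ lam2 := le_trans h1 h12.le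
  have hlam1' : lam1 < 1 := lt_trans h12 h2
  set α1 := uamoAlpha lam1 lam2 Phi1 theta beta0 beta1 with hα1
  set α2 := uamoAlpha lam1 lam2 Phi2 theta beta0 beta1 with hα2
  have hae : ∀ n : ℤ, Even n → α1 n = α2 n := fun n hn =>
    uamoAlpha_even lam1 lam2 Phi1 Phi2 theta beta0 beta1 hn
  have hα1le : ∀ n, ‖α1 n‖ ≤ 1 :=
    uamoAlpha_norm_le lam1 lam2 Phi1 theta beta0 beta1 h1 hlam1' hlam2 h2 hb0 hb1
  set ψc : ℤ → ℂ := fun m => ψ m with hψc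
  set Dm : ℤ → ℂ := fun j => cmvMApply α1 ψc j - cmvMApply α2 ψc j with hDm
  set C : ℝ := 2 * Real.pi * lam2 * |Phi1 - Phi2| * (t:ℝ) with hCdef
  have hC : 0 ≤ C := by positivity
  set v : l2Z := E1 ψ - E2 ψ with hv
  -- pointwise identity
  have hvn : ∀ n : ℤ, (v : ∀ _ : ℤ, ℂ) n = cmvLApply α1 Dm n := by
    intro n
    have h0 : (v : ∀ _ : ℤ, ℂ) n = (E1 ψ) n - (E2 ψ) n := by
      rw [hv, lp.coeFn_sub]; rfl
    rw [h0, hE1.2 ψ n, hE2.2 ψ n, ← cmvLApply_congr hae (cmvMApply α2 ψc) n,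
      cmvLApply_sub]
  have key : ENNReal.ofReal (‖v‖^2) ≤ ENNReal.ofReal (C^2) := by
    have step1 : ENNReal.ofReal (‖v‖^2) = ∑' n : ℤ, ENNReal.ofReal (‖cmvLApply α1 Dm n‖^2) := by
      rw [lp_ofReal_norm_sq v]
      exact tsum_congr fun n => by rw [hvn n]
    have step2 : ∑' n : ℤ, ENNReal.ofReal (‖cmvLApply α1 Dm n‖^2)
        = ∑' n : ℤ, ENNReal.ofReal (‖Dm n‖^2) := by
      rw [aux_tsum_pair 0 (fun n => ENNReal.ofReal (‖cmvLApply α1 Dm n‖^2)),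
        aux_tsum_pair 0 (fun n => ENNReal.ofReal (‖Dm n‖^2))]
      refine tsum_congr fun m => ?_
      simp only [add_zero]
      rw [← ENNReal.ofReal_add (by positivity) (by positivity),
        ← ENNReal.ofReal_add (by positivity) (by positivity), aux_Lblock α1 hα1le Dm m]
    have step3 : ∑' n : ℤ, ENNReal.ofReal (‖Dm n‖^2)
        ≤ ENNReal.ofReal (C^2) * ∑' n : ℤ, ENNReal.ofReal (‖ψc n‖^2) := by
      rw [aux_tsum_pair 1 (fun n => ENNReal.ofReal (‖Dm n‖^2)),
        aux_tsum_pair 1 (fun n => ENNReal.ofReal (‖ψc n‖^2)), ← ENNReal.tsum_mul_left]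
      refine ENNReal.tsum_le_tsum fun m => ?_
      rw [← ENNReal.ofReal_add (by positivity) (by positivity),
        ← ENNReal.ofReal_add (by positivity) (by positivity),
        ← ENNReal.ofReal_mul (by positivity)]
      exact ENNReal.ofReal_le_ofReal
        (aux_Mblock lam1 lam2 h1 h12 h2 Phi1 Phi2 theta beta0 beta1 t ht ψc hsupp m)
    have step4 : ∑' n : ℤ, ENNReal.ofReal (‖ψc n‖^2) ≤ 1 := by
      have : ∑' n : ℤ, ENNReal.ofReal (‖ψc n‖^2) = ENNReal.ofReal (‖ψ‖^2) :=
        (lp_ofReal_norm_sq ψ).symm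
      rw [this]
      calc ENNReal.ofReal (‖ψ‖^2) ≤ ENNReal.ofReal 1 :=
            ENNReal.ofReal_le_ofReal (by nlinarith [norm_nonneg ψ])
        _ = 1 := ENNReal.ofReal_one
    calc ENNReal.ofReal (‖v‖^2) = ∑' n : ℤ, ENNReal.ofReal (‖Dm n‖^2) := by rw [step1, step2]
      _ ≤ ENNReal.ofReal (C^2) * ∑' n : ℤ, ENNReal.ofReal (‖ψc n‖^2) := step3
      _ ≤ ENNReal.ofReal (C^2) * 1 := mul_le_mul_right step4 _
      _ = ENNReal.ofReal (C^2) := mul_one _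
  have hre : ‖v‖^2 ≤ C^2 := (ENNReal.ofReal_le_ofReal_iff (by positivity)).mp key
  have hfin := Real.sqrt_le_sqrt hre
  rwa [Real.sqrt_sq (norm_nonneg v), Real.sqrt_sq hC] at hfin

/-! ### Telescoping -/

lemma telescope_bound (E1 E2 : l2Z →L[ℂ] l2Z)
    (hu1 : E1 ∈ unitary (l2Z →L[ℂ] l2Z)) (x : l2Z) (C : ℝ) (hC : 0 ≤ C) (t : ℕ)
    (hstep : ∀ k : ℕ, k < t → ‖E1 ((E2^k) x) - E2 ((E2^k) x)‖ ≤ C) :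
    ∀ s : ℕ, s ≤ t → ‖(E1^s) x - (E2^s) x‖ ≤ s * C := by
  intro s
  induction s with
  | zero => intro _; simp
  | succ s ih =>
      intro hs
      have hss : s ≤ t := le_trans (Nat.le_succ s) hs
      have h1 : (E1^(s+1)) x - (E2^(s+1)) x
          = E1 ((E1^s) x - (E2^s) x) + (E1 ((E2^s) x) - E2 ((E2^s) x)) := by
        rw [map_sub]
        rw [show (E1^(s+1)) x = E1 ((E1^s) x) by rw [pow_succ' E1 s]; rfl,
          show (E2^(s+1)) x = E2 ((E2^s) x) by rw [pow_succ' E2 s]; rfl]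
        abel
      rw [h1]
      calc ‖E1 ((E1^s) x - (E2^s) x) + (E1 ((E2^s) x) - E2 ((E2^s) x))‖
          ≤ ‖E1 ((E1^s) x - (E2^s) x)‖ + ‖E1 ((E2^s) x) - E2 ((E2^s) x)‖ := norm_add_le _ _
        _ ≤ s * C + C := by
            have hn : ‖E1 ((E1^s) x - (E2^s) x)‖ = ‖(E1^s) x - (E2^s) x‖ :=
              ContinuousLinearMap.norm_map_of_mem_unitary hu1 _
            have := ih hss
            have := hstep s (by omega)
            rw [hn]
            linarith
        _ = (s+1 : ℕ) * C := by push_cast; ring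

/-! ### Main theorem -/

/-- Fix `0 ≤ λ₁ < λ₂ < 1`.  For all `Φ₁, Φ₂ ∈ ℝ` and every positive integer
`t`, uniformly over `θ ∈ ℝ` and `β₀, β₁ ∈ 𝔻`, one has
`‖E_{Φ₁,θ,β₀,β₁}ᵗ δ₀ - E_{Φ₂,θ,β₀,β₁}ᵗ δ₀‖ ≤ 2πλ₂|Φ₁ - Φ₂|·t²`. -/
theorem stmt_13
    (lam1 lam2 : ℝ) (h1 : 0 ≤ lam1) (h12 : lam1 < lam2) (h2 : lam2 < 1)
    (Phi1 Phi2 : ℝ) (t : ℕ) (ht : 0 < t) :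
    ∀ theta : ℝ, ∀ beta0 beta1 : ℂ, ‖beta0‖ < 1 → ‖beta1‖ < 1 →
      ∀ E1 E2 : l2Z →L[ℂ] l2Z,
        IsECMV (uamoAlpha lam1 lam2 Phi1 theta beta0 beta1) E1 →
        IsECMV (uamoAlpha lam1 lam2 Phi2 theta beta0 beta1) E2 →
        ‖(E1 ^ t) (deltaVec 0) - (E2 ^ t) (deltaVec 0)‖ ≤
          2 * Real.pi * lam2 * |Phi1 - Phi2| * (t : ℝ) ^ 2 := by
  intro theta beta0 beta1 hb0 hb1 E1 E2 hE1 hE2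
  have hlam2 : 0 ≤ lam2 := le_trans h1 h12.le
  set C : ℝ := 2 * Real.pi * lam2 * |Phi1 - Phi2| * (t:ℝ) with hCdef
  have hC : 0 ≤ C := by positivity
  have hstep : ∀ k : ℕ, k < t →
      ‖E1 ((E2^k) (deltaVec 0)) - E2 ((E2^k) (deltaVec 0))‖ ≤ C := by
    intro k hk
    set ψ : l2Z := (E2^k) (deltaVec 0) with hψ
    have hsupp : SuppIn (2*(t:ℤ) - 2) (fun m => ψ m) := by
      have := SuppIn.pow_deltaVec hE2 k
      exact this.mono (by omega)
    have hnorm : ‖ψ‖ ≤ 1 := by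
      have hu : E2^k ∈ unitary (l2Z →L[ℂ] l2Z) := pow_mem hE2.1 k
      have h1' : ‖ψ‖ = ‖deltaVec 0‖ := ContinuousLinearMap.norm_map_of_mem_unitary hu _
      have h2' : ‖deltaVec 0‖ = 1 := by
        unfold deltaVec
        have := lp.norm_single (p := 2) (E := fun _ : ℤ => ℂ) (by norm_num)
          0 (1:ℂ)
        simpa using this
      rw [h1', h2']
    exact core_step lam1 lam2 h1 h12 h2 Phi1 Phi2 theta beta0 beta1 hb0 hb1 t ht
      E1 E2 hE1 hE2 ψ hsupp hnorm
  have := telescope_bound E1 E2 hE1.1 (deltaVec 0) C hC t hstep t le_rfl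
  calc ‖(E1 ^ t) (deltaVec 0) - (E2 ^ t) (deltaVec 0)‖ ≤ t * C := this
    _ = 2 * Real.pi * lam2 * |Phi1 - Phi2| * (t : ℝ) ^ 2 := by rw [hCdef]; ring

end
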